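/- Let R be a nonempty finite set, let λ > 0 and Δ ≥ 0 be reals, and let f, g : R → ℝ satisfy |f(r) − g(r)| ≤ Δ for every r ∈ R. Define the probability distributions p_f(r) = exp(λ·f(r)) / ∑_{r'∈R} exp(λ·f(r')) and p_g(r) = exp(λ·g(r)) / ∑_{r'∈R} exp(λ·g(r')). Then p_f(r) ≤ exp(2λΔ)·p_g(r) for every r ∈ R. -/
import Mathlib


/-- **Privacy of the exponential mechanism.** Let `R` be a nonempty finite set,
`λ > 0` and `Δ ≥ 0` reals, and let `f, g : R → ℝ` satisfy `|f(r) − g(r)| ≤ Δ` for every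
`r ∈ R`.  Define `p_f(r) = exp(λ·f(r)) / ∑_{r'∈R} exp(λ·f(r'))` and similarly `p_g`.
Then `p_f(r) ≤ exp(2λΔ)·p_g(r)` for every `r ∈ R`. -/
theorem exponential_mechanism_privacy {Ω : Type*}
    (R : Finset Ω) (hR : R.Nonempty)
    (lam Δ : ℝ) (hlam : 0 < lam) (hΔ : 0 ≤ Δ)
    (f g : Ω → ℝ) (hfg : ∀ r ∈ R, |f r - g r| ≤ Δ) :
    ∀ r ∈ R,
      Real.exp (lam * f r) / ∑ r' ∈ R, Real.exp (lam * f r')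
        ≤ Real.exp (2 * lam * Δ)
            * (Real.exp (lam * g r) / ∑ r' ∈ R, Real.exp (lam * g r')) := by
  intro r hr
  set Sf := ∑ r' ∈ R, Real.exp (lam * f r') with hSf
  set Sg := ∑ r' ∈ R, Real.exp (lam * g r') with hSg
  have hSfpos : 0 < Sf := Finset.sum_pos (fun i _ => Real.exp_pos _) hR
  have hSgpos : 0 < Sg := Finset.sum_pos (fun i _ => Real.exp_pos _) hR
  have hnum : Real.exp (lam * f r) ≤ Real.exp (lam * Δ) * Real.exp (lam * g r) := by
    rw [← Real.exp_add]
    apply Real.exp_le_exp.2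
    have := (abs_le.1 (hfg r hr)).2
    nlinarith
  have hden : Sg ≤ Real.exp (lam * Δ) * Sf := by
    rw [Finset.mul_sum]
    apply Finset.sum_le_sum
    intro i hi
    rw [← Real.exp_add]
    apply Real.exp_le_exp.2
    have := (abs_le.1 (hfg i hi)).1
    nlinarith
  have key : Real.exp (lam * f r) * Sg ≤
      (Real.exp (2 * lam * Δ) * Real.exp (lam * g r)) * Sf := by
    calc Real.exp (lam * f r) * Sg
        ≤ (Real.exp (lam * Δ) * Real.exp (lam * g r)) * (Real.exp (lam * Δ) * Sf) := by
          apply mul_le_mul hnum hden hSgpos.le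
          positivity
      _ = (Real.exp (2 * lam * Δ) * Real.exp (lam * g r)) * Sf := by
          have h2 : Real.exp (lam * Δ) * Real.exp (lam * Δ) = Real.exp (2 * lam * Δ) := by
            rw [← Real.exp_add]; ring_nf
          rw [← h2]; ring
  rw [← mul_div_assoc, div_le_div_iff₀ hSfpos hSgpos]
  linarith [key]
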